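/- Let k ≥ 1 be an integer and a ∈ ℝ with a ≠ 0. Then the function x ↦ a·(a² + |x|²)^{−k} is integrable on ℝ^{2k−1} and ∫_{ℝ^{2k−1}} a (a² + |x|²)^{−k} dx = sgn(a) · π^k / (k−1)!. -/

import Mathlib

open MeasureTheory Real Set

lemma gammaHalf (m : ℕ) :
    Real.Gamma (m + 1/2) = Real.sqrt π * (Nat.factorial (2*m)) / (4^m * Nat.factorial m) := by
  induction m with
  | zero =>
    rw [show ((0:ℕ):ℝ) + 1/2 = 1/2 by norm_num, Real.Gamma_one_half_eq]
    simp
  | succ j ih =>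
    have h : ((j:ℝ)+1) + 1/2 = (j + 1/2) + 1 := by ring
    push_cast
    rw [h, Real.Gamma_add_one (by positivity), ih]
    rw [show 2*(j+1) = (2*j+1)+1 from by ring, Nat.factorial_succ, Nat.factorial_succ,
      Nat.factorial_succ]
    have hf : (Nat.factorial j : ℝ) ≠ 0 := Nat.cast_ne_zero.mpr (Nat.factorial_ne_zero j)
    have h4 : (4:ℝ)^j ≠ 0 := by positivity
    push_cast
    field_simp
    ring

lemma wallis (m : ℕ) :
    ∫ x in (0:ℝ)..(π/2), Real.sin x ^ (2*m)
      = π/2 * (Nat.factorial (2*m)) / (4^m * (Nat.factorial m * Nat.factorial m)) := by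
  induction m with
  | zero => simp
  | succ j ih =>
    rw [show 2*(j+1) = 2*j + 2 from by ring, integral_sin_pow, ih]
    rw [Real.sin_zero, Real.cos_pi_div_two, zero_pow (by omega), mul_zero, zero_mul, zero_sub,
      neg_zero, zero_div, zero_add]
    have e1 : (Nat.factorial (2*j+2) : ℝ) = (2*(j:ℝ)+2)*((2*(j:ℝ)+1)*Nat.factorial (2*j)) := by
      rw [show 2*j+2 = (2*j+1)+1 from by omega, Nat.factorial_succ, Nat.factorial_succ]
      push_cast; ring
    have e2 : (Nat.factorial (j+1) : ℝ) = ((j:ℝ)+1)*Nat.factorial j := by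
      rw [Nat.factorial_succ]; push_cast; ring
    rw [e1, e2]
    have hf : (Nat.factorial j : ℝ) ≠ 0 := Nat.cast_ne_zero.mpr (Nat.factorial_ne_zero j)
    have h4 : (4:ℝ)^j ≠ 0 := by positivity
    push_cast
    field_simp
    ring

lemma rIntegral (j : ℕ) :
    ∫ r in Set.Ioi (0:ℝ), r^(2*j) / (1+r^2)^(j+1)
      = ∫ x in (0:ℝ)..(π/2), Real.sin x ^ (2*j) := by
  have hππ : 0 < π/2 := by positivity
  have himg : Real.tan '' Set.Ioo 0 (π/2) = Set.Ioi (0:ℝ) := by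
    apply Set.eq_of_subset_of_subset
    · rintro y ⟨x, hx, rfl⟩
      exact Real.tan_pos_of_pos_of_lt_pi_div_two hx.1 hx.2
    · intro y hy
      refine ⟨Real.arctan y, ⟨?_, Real.arctan_lt_pi_div_two y⟩, Real.tan_arctan y⟩
      have := Real.arctan_strictMono hy
      rwa [Real.arctan_zero] at this
  have hsub : Set.Ioo (0:ℝ) (π/2) ⊆ Set.Ioo (-(π/2)) (π/2) :=
    Set.Ioo_subset_Ioo (by linarith) le_rfl
  have hderiv : ∀ x ∈ Set.Ioo (0:ℝ) (π/2),
      HasDerivWithinAt Real.tan (1 / Real.cos x ^ 2) (Set.Ioo 0 (π/2)) x := by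
    intro x hx
    exact (Real.hasDerivAt_tan (Real.cos_pos_of_mem_Ioo (hsub hx)).ne').hasDerivWithinAt
  have hinj : Set.InjOn Real.tan (Set.Ioo (0:ℝ) (π/2)) := Real.injOn_tan.mono hsub
  have hsubst := integral_image_eq_integral_abs_deriv_smul measurableSet_Ioo hderiv hinj
      (fun r : ℝ => r^(2*j) / (1+r^2)^(j+1))
  rw [himg] at hsubst
  rw [hsubst]
  rw [intervalIntegral.integral_of_le hππ.le, MeasureTheory.integral_Ioc_eq_integral_Ioo]
  have hcong : ∀ x ∈ Set.Ioo (0:ℝ) (π/2),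
      |1 / Real.cos x ^ 2| • (Real.tan x ^ (2*j) / (1 + Real.tan x ^ 2) ^ (j+1))
        = Real.sin x ^ (2*j) := by
    intro x hx
    have hc : 0 < Real.cos x := Real.cos_pos_of_mem_Ioo (hsub hx)
    have hccne : Real.cos x ≠ 0 := hc.ne'
    have h1 : 1 + Real.tan x ^ 2 = (Real.cos x ^ 2)⁻¹ := by
      rw [← Real.inv_one_add_tan_sq hccne, inv_inv]
    rw [smul_eq_mul, abs_of_pos (by positivity : (0:ℝ) < 1 / Real.cos x ^ 2), h1,
      Real.tan_eq_sin_div_cos]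
    field_simp
    ring_nf
    have hcc : Real.cos x ^ 2 * (Real.cos x)⁻¹ ^ 2 = 1 := by
      rw [← mul_pow, mul_inv_cancel₀ hccne, one_pow]
    rw [mul_assoc (Real.sin x ^ (j*2)), hcc, mul_one]
  exact MeasureTheory.setIntegral_congr_fun measurableSet_Ioo hcong

/-- For `k ≥ 1` and real `a ≠ 0`, the function
`x ↦ a * (a² + |x|²)⁻ᵏ` is integrable on `ℝ^{2k-1}` and its integral equals
`sgn(a) * π^k / (k-1)!`. -/
theorem stmt_13 (k : ℕ) (hk : 1 ≤ k) (a : ℝ) (ha : a ≠ 0) :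
    Integrable (fun x : EuclideanSpace ℝ (Fin (2 * k - 1)) =>
      a / (a ^ 2 + ‖x‖ ^ 2) ^ k) ∧
    ∫ x : EuclideanSpace ℝ (Fin (2 * k - 1)), a / (a ^ 2 + ‖x‖ ^ 2) ^ k
      = Real.sign a * Real.pi ^ k / (Nat.factorial (k - 1)) := by
  obtain ⟨j, rfl⟩ : ∃ j, k = j + 1 := ⟨k-1, (Nat.succ_pred_eq_of_pos hk).symm⟩
  set n : ℕ := 2*(j+1) - 1 with hn
  have hn' : n = 2*j+1 := by omega
  set E := EuclideanSpace ℝ (Fin n) with hE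
  haveI : Nonempty (Fin n) := ⟨⟨0, by omega⟩⟩
  haveI : Nontrivial E := by
    have : 0 < Module.finrank ℝ E := by
      rw [finrank_euclideanSpace_fin]; omega
    exact Module.nontrivial_of_finrank_pos this
  have hfr : Module.finrank ℝ E = n := finrank_euclideanSpace_fin
  set g : E → ℝ := fun x => 1 / (1 + ‖x‖^2)^(j+1) with hg
  have hg_int : Integrable g := by
    have h1 : Integrable (fun x : E => ((1:ℝ) + ‖x‖^2) ^ (-(2*((j:ℝ)+1))/2)) :=
      integrable_rpow_neg_one_add_norm_sq (by rw [hfr, hn']; push_cast; linarith)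
    have heq : ∀ x : E, ((1:ℝ) + ‖x‖^2) ^ (-(2*((j:ℝ)+1))/2) = g x := by
      intro x
      have hp : (0:ℝ) < 1 + ‖x‖^2 := by positivity
      show ((1:ℝ) + ‖x‖^2) ^ (-(2*((j:ℝ)+1))/2) = 1 / (1 + ‖x‖^2)^(j+1)
      rw [show (-(2*((j:ℝ)+1))/2) = -(((j+1 : ℕ) : ℝ)) from by push_cast; ring,
        Real.rpow_neg hp.le, Real.rpow_natCast, one_div]
    exact (funext heq ▸ h1)
  have hg_val : ∫ x : E, g x = π ^ (j+1) / Nat.factorial j := by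
    have hmain := integral_fun_norm_addHaar (volume : Measure E)
      (fun r : ℝ => 1 / (1 + r^2)^(j+1))
    rw [hfr] at hmain
    have hinner : ∀ y : ℝ, y ^ (n - 1) • (1 / (1 + y^2)^(j+1))
        = y^(2*j) / (1+y^2)^(j+1) := by
      intro y
      rw [smul_eq_mul, show n - 1 = 2*j from by omega]
      ring
    rw [show (fun x : E => g x) = (fun x : E => (fun r : ℝ => 1/(1+r^2)^(j+1)) ‖x‖) from rfl,
      hmain]
    simp only [hinner]
    rw [rIntegral, wallis]
    have hball := EuclideanSpace.volume_ball (ι := Fin n) 0 1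
    rw [Fintype.card_fin] at hball
    rw [show (Metric.ball (0 : EuclideanSpace ℝ (Fin n)) 1) = Metric.ball (0:E) 1 from rfl]
      at hball
    rw [measureReal_def, hball, ENNReal.ofReal_one, one_pow, one_mul, ENNReal.toReal_ofReal (by positivity)]
    have hgam : ((n:ℝ)/2 + 1) = ((j+1 : ℕ) : ℝ) + 1/2 := by
      rw [hn']; push_cast; ring
    rw [hgam, gammaHalf (j+1)]
    have hsπ : Real.sqrt π ≠ 0 := by positivity
    have hπ : (0:ℝ) < π := Real.pi_pos
    have hsq : Real.sqrt π ^ 2 = π := Real.sq_sqrt hπ.le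
    have hpow : Real.sqrt π ^ n = π ^ j * Real.sqrt π := by
      rw [hn', pow_succ, pow_mul, hsq]
    have hfac2 : (Nat.factorial (2*(j+1)) : ℝ)
        = (2*(j:ℝ)+2) * ((2*(j:ℝ)+1) * Nat.factorial (2*j)) := by
      rw [show 2*(j+1) = (2*j+1)+1 from by ring, Nat.factorial_succ, Nat.factorial_succ]
      push_cast; ring
    have hfac1 : (Nat.factorial (j+1) : ℝ) = ((j:ℝ)+1) * Nat.factorial j := by
      rw [Nat.factorial_succ]; push_cast; ring
    have hfj : (Nat.factorial j : ℝ) ≠ 0 := Nat.cast_ne_zero.mpr (Nat.factorial_ne_zero j)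
    have hf2j : (Nat.factorial (2*j) : ℝ) ≠ 0 := Nat.cast_ne_zero.mpr (Nat.factorial_ne_zero _)
    have h4 : (4:ℝ)^j ≠ 0 := by positivity
    rw [nsmul_eq_mul, smul_eq_mul, hpow, hfac2, hfac1, hn']
    have hj1 : ((2*j+1 : ℕ) : ℝ) = 2*(j:ℝ)+1 := by push_cast; ring
    rw [hj1]
    have h2j1 : (2*(j:ℝ)+1) ≠ 0 := by positivity
    have h2j2 : (2*(j:ℝ)+2) ≠ 0 := by positivity
    have hj1' : ((j:ℝ)+1) ≠ 0 := by positivity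
    field_simp
    ring
  have habs : |a| ≠ 0 := abs_ne_zero.mpr ha
  have habs' : (0:ℝ) < |a| := abs_pos.mpr ha
  have ha2 : a ^ (2*(j+1)) = |a| ^ (2*(j+1)) := by
    rw [← abs_pow, abs_of_nonneg ((even_two_mul (j+1)).pow_nonneg a)]
  have key : ∀ x : E, a / (a^2 + ‖x‖^2)^(j+1)
      = (a / |a|^(2*(j+1))) * g (|a|⁻¹ • x) := by
    intro x
    have hnx : ‖(|a|⁻¹ • x)‖ = |a|⁻¹ * ‖x‖ := by
      rw [norm_smul, Real.norm_eq_abs, abs_of_pos (by positivity)]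
    rw [hg]
    simp only [hnx]
    have hpos : (0:ℝ) < a^2 + ‖x‖^2 := by positivity
    have hstep : (1 + (|a|⁻¹*‖x‖)^2) = (a^2 + ‖x‖^2) / a^2 := by
      have : (|a|⁻¹*‖x‖)^2 = ‖x‖^2 / a^2 := by
        rw [mul_pow, inv_pow, sq_abs]
        ring
      rw [this]
      field_simp [pow_ne_zero 2 ha]
    rw [hstep, div_pow]
    have ha2' : (a^2)^(j+1) = |a|^(2*(j+1)) := by
      rw [← pow_mul, ha2]
    rw [ha2']
    have hne1 : ((a^2+‖x‖^2)^(j+1)) ≠ 0 := by positivity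
    have hne2 : (|a|^(2*(j+1))) ≠ 0 := by positivity
    field_simp
  have hsign : a / |a| = Real.sign a := by
    rcases lt_or_gt_of_ne ha with h | h
    · rw [Real.sign_of_neg h, abs_of_neg h]
      field_simp
    · rw [Real.sign_of_pos h, abs_of_pos h]
      field_simp
  constructor
  · have h1 : Integrable (fun x : E => g (|a|⁻¹ • x)) :=
      (integrable_comp_smul_iff volume g (inv_ne_zero habs)).2 hg_int
    have h2 := h1.const_mul (a / |a|^(2*(j+1)))
    apply h2.congr
    filter_upwards with x
    exact (key x).symm
  · calc ∫ x : E, a / (a^2 + ‖x‖^2)^(j+1)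
        = ∫ x : E, (a / |a|^(2*(j+1))) * g (|a|⁻¹ • x) :=
          integral_congr_ae (Filter.Eventually.of_forall key)
      _ = (a / |a|^(2*(j+1))) * ∫ x : E, g (|a|⁻¹ • x) := integral_const_mul _ _
      _ = (a / |a|^(2*(j+1))) * (|((|a|⁻¹) ^ Module.finrank ℝ E)⁻¹| * ∫ x : E, g x) := by
          rw [Measure.integral_comp_smul volume g (|a|⁻¹), smul_eq_mul]
      _ = Real.sign a * π ^ (j+1) / Nat.factorial j := by
          rw [hg_val, hfr, hn']
          rw [inv_pow, inv_inv, abs_pow, abs_abs]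
          rw [show 2*(j+1) = (2*j+1)+1 from by ring, pow_succ]
          rw [← hsign]
          have hfj : (Nat.factorial j : ℝ) ≠ 0 := Nat.cast_ne_zero.mpr (Nat.factorial_ne_zero j)
          have hp : (|a|:ℝ)^(2*j+1) ≠ 0 := by positivity
          field_simp
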